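/- For every epistemic interpretation E on W and every fixed proposition C ⊆ W, the binary relation A |~ B defined by 'E satisfies the situated conditional A |~_C B' satisfies the situated rationality postulates: (Ref) A |~ A; (And) if A |~ B and A |~ D then A |~ B ∩ D; (Or) if A |~ D and B |~ D then A ∪ B |~ D; (RW) if A |~ B and B ⊆ D then A |~ D; (CM) if A |~ B and A |~ D then A ∩ D |~ B; (RM) if A |~ B and not A |~ (W \ D) then A ∩ D |~ B. -/

import Mathlib

open scoped Classical

/-- The set of ranks `Rk`: finite ranks `(f, i)` with `i ∈ ℕ`, and infinite
ranks `(∞, i)` with `i ∈ ℕ ∪ {∞}`. -/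
inductive Rk where
  | fin : ℕ → Rk
  | inf : ℕ∞ → Rk

/-- The total order on ranks: `(f,i) ≤ (f,j)` iff `i ≤ j`; `(∞,i) ≤ (∞,j)` iff
`i ≤ j`; every finite rank is below every infinite rank. -/
def Rk.le : Rk → Rk → Prop
  | .fin i, .fin j => i ≤ j
  | .fin _, .inf _ => True
  | .inf _, .fin _ => False
  | .inf i, .inf j => i ≤ j

variable {W : Type*} [Fintype W] [Nonempty W]

/-- A ranked interpretation: a function `R : W → ℕ∞` satisfying convexity. -/
def RankedInterp (R : W → ℕ∞) : Prop :=
  ∀ u : W, ∀ i : ℕ, R u = (i : ℕ∞) → ∀ j : ℕ, j < i → ∃ u' : W, R u' = (j : ℕ∞)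

/-- The finitely ranked (plausible) worlds of a ranked interpretation. -/
def UfR (R : W → ℕ∞) : Set W := {u | R u ≠ ⊤}

/-- `R` satisfies the defeasible conditional `A |~ B`: every world of `A` of
finite rank whose rank is minimal among finitely ranked worlds of `A` is in `B`. -/
def SatDC (R : W → ℕ∞) (A B : Set W) : Prop :=
  ∀ u ∈ A ∩ UfR R, (∀ v ∈ A ∩ UfR R, R u ≤ R v) → u ∈ B

/-- An epistemic interpretation: a function `E : W → Rk` satisfying the two-tier
convexity property. -/
def EpiInterp (E : W → Rk) : Prop :=
  (∀ u : W, ∀ i : ℕ, E u = Rk.fin i → ∀ j : ℕ, j < i → ∃ u' : W, E u' = Rk.fin j) ∧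
  (∀ u : W, ∀ i : ℕ, E u = Rk.inf (i : ℕ∞) → ∀ j : ℕ, j < i → ∃ u' : W, E u' = Rk.inf (j : ℕ∞))

/-- Plausible worlds of an epistemic interpretation: those with finite rank `(f,i)`. -/
def UfE (E : W → Rk) : Set W := {u | ∃ i : ℕ, E u = Rk.fin i}

/-- Implausible-but-possible worlds: those with rank `(∞,i)`, `i ∈ ℕ`. -/
def UiE (E : W → Rk) : Set W := {u | ∃ i : ℕ, E u = Rk.inf (i : ℕ∞)}

/-- `E` satisfies the situated conditional `A |~_C B`. -/
def SatSC (E : W → Rk) (A B C : Set W) : Prop :=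
  if (C ∩ UfE E).Nonempty then
    ∀ u ∈ A ∩ C ∩ UfE E, (∀ v ∈ A ∩ C ∩ UfE E, (E u).le (E v)) → u ∈ B
  else
    ∀ u ∈ A ∩ C ∩ UiE E, (∀ v ∈ A ∩ C ∩ UiE E, (E u).le (E v)) → u ∈ B


set_option linter.unusedSectionVars false
set_option linter.unusedVariables false

theorem Rk.le.refl (a : Rk) : a.le a := by cases a <;> simp [Rk.le]

theorem Rk.le.trans' {a b c : Rk} (h1 : a.le b) (h2 : b.le c) : a.le c := by
  cases a <;> cases b <;> cases c <;> simp_all [Rk.le] <;>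
    first | trivial | exact le_trans h1 h2

theorem Rk.le.total' (a b : Rk) : a.le b ∨ b.le a := by
  cases a <;> cases b <;> simp [Rk.le] <;> first | omega | exact le_total _ _

theorem exists_min_rk (E : W → Rk) (S : Set W) (hS : S.Nonempty) :
    ∃ m ∈ S, ∀ v ∈ S, (E m).le (E v) := by
  classical
  have hfin : S.Finite := Set.toFinite S
  refine Set.Finite.induction_on
    (motive := fun T _ => T.Nonempty → ∃ m ∈ T, ∀ v ∈ T, (E m).le (E v)) S hfin ?_ ?_ hS
  · rintro ⟨x, hx⟩; exact absurd hx (Set.notMem_empty x)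
  · intro a s ha hs ih _
    rcases s.eq_empty_or_nonempty with rfl | ⟨y, hy⟩
    · refine ⟨a, Set.mem_insert a _, ?_⟩
      rintro v (rfl | h)
      · exact Rk.le.refl _
      · exact absurd h (Set.notMem_empty v)
    · obtain ⟨m, hm, hmin⟩ := ih ⟨y, hy⟩
      rcases Rk.le.total' (E a) (E m) with h | h
      · refine ⟨a, Set.mem_insert a _, ?_⟩
        rintro v (rfl | hv)
        · exact Rk.le.refl _
        · exact Rk.le.trans' h (hmin v hv)
      · refine ⟨m, Set.mem_insert_of_mem _ hm, ?_⟩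
        rintro v (rfl | hv)
        · exact h
        · exact hmin v hv

section Generic

variable (E : W → Rk) (C U : Set W)

/-- The generic minimal-element satisfaction relation. -/
def Sat' (A B : Set W) : Prop :=
  ∀ u ∈ A ∩ C ∩ U, (∀ v ∈ A ∩ C ∩ U, (E u).le (E v)) → u ∈ B

theorem sat'_ref (A : Set W) : Sat' E C U A A :=
  fun u hu _ => hu.1.1

theorem sat'_and (A B D : Set W) (h1 : Sat' E C U A B) (h2 : Sat' E C U A D) :
    Sat' E C U A (B ∩ D) :=
  fun u hu hmin => ⟨h1 u hu hmin, h2 u hu hmin⟩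

theorem sat'_rw (A B D : Set W) (h1 : Sat' E C U A B) (hBD : B ⊆ D) :
    Sat' E C U A D :=
  fun u hu hmin => hBD (h1 u hu hmin)

theorem sat'_or (A B D : Set W) (h1 : Sat' E C U A D) (h2 : Sat' E C U B D) :
    Sat' E C U (A ∪ B) D := by
  rintro u ⟨⟨hAB, hC⟩, hU⟩ hmin
  rcases hAB with hA | hB
  · exact h1 u ⟨⟨hA, hC⟩, hU⟩ fun v ⟨⟨hvA, hvC⟩, hvU⟩ =>
      hmin v ⟨⟨Or.inl hvA, hvC⟩, hvU⟩
  · exact h2 u ⟨⟨hB, hC⟩, hU⟩ fun v ⟨⟨hvB, hvC⟩, hvU⟩ =>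
      hmin v ⟨⟨Or.inr hvB, hvC⟩, hvU⟩

theorem sat'_cm (A B D : Set W) (h1 : Sat' E C U A B) (h2 : Sat' E C U A D) :
    Sat' E C U (A ∩ D) B := by
  rintro u ⟨⟨⟨hA, hD⟩, hC⟩, hU⟩ hmin
  obtain ⟨m, hm, hmmin⟩ := exists_min_rk E (A ∩ C ∩ U) ⟨u, ⟨⟨hA, hC⟩, hU⟩⟩
  have hmD : m ∈ D := h2 m hm hmmin
  have hum : (E u).le (E m) :=
    hmin m ⟨⟨⟨hm.1.1, hmD⟩, hm.1.2⟩, hm.2⟩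
  exact h1 u ⟨⟨hA, hC⟩, hU⟩ fun v hv => Rk.le.trans' hum (hmmin v hv)

theorem sat'_rm (A B D : Set W) (h1 : Sat' E C U A B) (h2 : ¬ Sat' E C U A Dᶜ) :
    Sat' E C U (A ∩ D) B := by
  simp only [Sat'] at h2
  push_neg at h2
  obtain ⟨m, hm, hmmin, hmD⟩ := h2
  rw [Set.notMem_compl_iff] at hmD
  rintro u ⟨⟨⟨hA, hD⟩, hC⟩, hU⟩ hmin
  have hum : (E u).le (E m) :=
    hmin m ⟨⟨⟨hm.1.1, hmD⟩, hm.1.2⟩, hm.2⟩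
  exact h1 u ⟨⟨hA, hC⟩, hU⟩ fun v hv => Rk.le.trans' hum (hmmin v hv)

end Generic

/-- for an epistemic interpretation `E` and a fixed situation `C`,
the binary relation `A |~ B := SatSC E A B C` satisfies the situated
rationality postulates Ref, And, Or, RW, CM and RM. -/
theorem situated_rationality_postulates (E : W → Rk) (hE : EpiInterp E)
    (C : Set W) :
    (∀ A : Set W, SatSC E A A C) ∧
    (∀ A B D : Set W, SatSC E A B C → SatSC E A D C → SatSC E A (B ∩ D) C) ∧
    (∀ A B D : Set W, SatSC E A D C → SatSC E B D C → SatSC E (A ∪ B) D C) ∧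
    (∀ A B D : Set W, SatSC E A B C → B ⊆ D → SatSC E A D C) ∧
    (∀ A B D : Set W, SatSC E A B C → SatSC E A D C → SatSC E (A ∩ D) B C) ∧
    (∀ A B D : Set W, SatSC E A B C → ¬ SatSC E A Dᶜ C → SatSC E (A ∩ D) B C) := by
  have key : ∀ U : Set W,
      (∀ A : Set W, Sat' E C U A A) ∧
      (∀ A B D : Set W, Sat' E C U A B → Sat' E C U A D → Sat' E C U A (B ∩ D)) ∧
      (∀ A B D : Set W, Sat' E C U A D → Sat' E C U B D → Sat' E C U (A ∪ B) D) ∧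
      (∀ A B D : Set W, Sat' E C U A B → B ⊆ D → Sat' E C U A D) ∧
      (∀ A B D : Set W, Sat' E C U A B → Sat' E C U A D → Sat' E C U (A ∩ D) B) ∧
      (∀ A B D : Set W, Sat' E C U A B → ¬ Sat' E C U A Dᶜ → Sat' E C U (A ∩ D) B) :=
    fun U => ⟨sat'_ref E C U, sat'_and E C U, sat'_or E C U, sat'_rw E C U,
      sat'_cm E C U, sat'_rm E C U⟩
  by_cases h : (C ∩ UfE E).Nonempty
  · simp only [SatSC, if_pos h]
    exact key (UfE E)
  · simp only [SatSC, if_neg h]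
    exact key (UiE E)
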